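/- (No-false-alarm condition via a hyper-node) Let U ⊆ V_H be a hyper-node and l ∈ E_U an operational link (l ∉ F). Suppose (1) D̃_{U,l} D̃_{U,l'} > 0 for all operational links l, l' ∈ E_U \ F, (2) if E_U ∩ F ≠ ∅ then no operational boundary edge has the same flow sign as the failed boundary edges (S_U = ∅), and (3) f_{U,g} - η|D̃_{U,l}| < 0, where f_{U,g} = Σ_{u∈U} g_{D,u} if D̃_{U,l} > 0 and Σ_{u∈U} g_{D,-u} otherwise. Then there exists z ≥ 0 satisfying the alternative system for Q_f = {l}, Q_m = ∅; consequently l is not falsely detected as failed by the LP-based algorithm. -/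
import Mathlib


open Matrix Finset

/-- The boundary edge set `E_U` of a hyper-node `U`: edges with exactly one endpoint in `U`. -/
def EUb {V E : Type*} [Fintype E] [DecidableEq V] (ends : E → V × V) (U : Finset V) :
    Finset E :=
  Finset.univ.filter (fun e =>
    ((ends e).1 ∈ U ∧ (ends e).2 ∉ U) ∨ ((ends e).2 ∈ U ∧ (ends e).1 ∉ U))

/-- `D̃_{U,e} = ∑_{u ∈ U} D̃_{u,e}`. -/
noncomputable def dtU {V E : Type*} (Dt : Matrix V E ℝ) (U : Finset V) (e : E) : ℝ :=
  ∑ u ∈ U, Dt u e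

/-- No-false-alarm condition via a hyper-node: under conditions (1)-(3) there is a
nonnegative solution of the alternative system for `Q_f = {l}`, `Q_m = ∅`. -/
theorem stmt11 {V E : Type*} [Fintype V] [DecidableEq V] [Fintype E] [DecidableEq E]
    (ends : E → V × V) (Dt : Matrix V E ℝ)
    (hD0 : ∀ u e, u ≠ (ends e).1 → u ≠ (ends e).2 → Dt u e = 0)
    (hskew : ∀ e, Dt (ends e).1 e = - Dt (ends e).2 e)
    (F : Finset E) (gD gDm : V → ℝ) (η : ℝ) (hη : 0 < η ∧ η < 1)
    (U : Finset V) (l : E) (hlU : l ∈ EUb ends U) (hlF : l ∉ F)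
    (hcond1 : ∀ l₁ ∈ EUb ends U, l₁ ∉ F → ∀ l₂ ∈ EUb ends U, l₂ ∉ F →
      dtU Dt U l₁ * dtU Dt U l₂ > 0)
    (hcond2 : (EUb ends U ∩ F).Nonempty →
      ∀ e ∈ EUb ends U, e ∉ F → ∀ l' ∈ EUb ends U ∩ F,
        ¬ (dtU Dt U l' * dtU Dt U e > 0))
    (hcond3 : (if dtU Dt U l > 0 then ∑ u ∈ U, gD u else ∑ u ∈ U, gDm u)
        - η * |dtU Dt U l| < 0) :
    ∃ (zD zDm : V → ℝ) (zxm zxp : E → ℝ) (zw zs : ℝ),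
      (∀ u, 0 ≤ zD u) ∧ (∀ u, 0 ≤ zDm u) ∧ (∀ e, 0 ≤ zxm e) ∧ (∀ e, 0 ≤ zxp e) ∧
      0 ≤ zw ∧ 0 ≤ zs ∧
      (∀ e, (∑ u, Dt u e * (zD u - zDm u)) + (zxp e - zxm e)
          - (if e = l then zw else 0) + zs = 0) ∧
      ((∑ u, (gD u * zD u + gDm u * zDm u))
        + (∑ e, (zxp e * (1 - (if e ∈ F then (1 : ℝ) else 0))
            + zxm e * (if e ∈ F then (1 : ℝ) else 0)))
        - η * zw < 0) := by
  classical
  set d := dtU Dt U l with hd_def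
  have hdd : d * d > 0 := hcond1 l hlU hlF l hlU hlF
  have hdne : d ≠ 0 := by intro h; rw [h] at hdd; simp at hdd
  set sgn : ℝ := if 0 < d then 1 else -1 with hsgn_def
  have hsgnd : sgn * d = |d| := by
    by_cases h : 0 < d
    · simp [hsgn_def, h, abs_of_pos h]
    · have hneg : d < 0 := lt_of_le_of_ne (not_lt.mp h) hdne
      simp [hsgn_def, h, abs_of_neg hneg]
  -- off-boundary edges have zero aggregated row
  have hoff : ∀ e, e ∉ EUb ends U → dtU Dt U e = 0 := by
    intro e he
    simp only [EUb, Finset.mem_filter, Finset.mem_univ, true_and] at he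
    push_neg at he
    by_cases h1 : (ends e).1 ∈ U
    · have h2 : (ends e).2 ∈ U := he.1 h1
      by_cases h12 : (ends e).1 = (ends e).2
      · have hz : Dt (ends e).1 e = 0 := by
          have := hskew e; rw [← h12] at this; linarith
        refine Finset.sum_eq_zero ?_
        intro u hu
        by_cases hu1 : u = (ends e).1
        · rw [hu1]; exact hz
        · exact hD0 u e hu1 (by rw [← h12]; exact hu1)
      · have hsub : ({(ends e).1, (ends e).2} : Finset V) ⊆ U := by
          intro x hx
          rcases Finset.mem_insert.mp hx with h | h
          · rwa [h]
          · rw [Finset.mem_singleton.mp h]; exact h2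
        have := Finset.sum_subset hsub (f := fun u => Dt u e)
          (fun x _ hx => by
            simp only [Finset.mem_insert, Finset.mem_singleton] at hx
            push_neg at hx
            exact hD0 x e hx.1 hx.2)
        rw [dtU, ← this, Finset.sum_pair h12]
        have := hskew e; linarith
    · have h2 : (ends e).2 ∉ U := fun h => h1 (he.2 h)
      exact Finset.sum_eq_zero fun u hu =>
        hD0 u e (fun h => h1 (h ▸ hu)) (fun h => h2 (h ▸ hu))
  refine ⟨(fun u => if u ∈ U ∧ 0 < d then 1 else 0),
    (fun u => if u ∈ U ∧ ¬ 0 < d then 1 else 0),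
    (fun e => if e ∈ EUb ends U ∧ e ∉ F ∧ e ≠ l then |dtU Dt U e| else 0),
    (fun e => if e ∈ EUb ends U ∧ e ∈ F then |dtU Dt U e| else 0),
    |d|, 0, ?_, ?_, ?_, ?_, abs_nonneg d, le_refl 0, ?_, ?_⟩
  · intro u; positivity
  · intro u; positivity
  · intro e; positivity
  · intro e; positivity
  · -- the linear system
    intro e
    have hsum : (∑ u, Dt u e * ((if u ∈ U ∧ 0 < d then (1:ℝ) else 0)
        - (if u ∈ U ∧ ¬ 0 < d then 1 else 0))) = sgn * dtU Dt U e := by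
      have hterm : ∀ u, Dt u e * ((if u ∈ U ∧ 0 < d then (1:ℝ) else 0)
          - (if u ∈ U ∧ ¬ 0 < d then 1 else 0)) = if u ∈ U then sgn * Dt u e else 0 := by
        intro u
        by_cases hu : u ∈ U <;> by_cases hp : 0 < d <;>
          simp [hu, hp, hsgn_def] <;> ring
      rw [Finset.sum_congr rfl (fun u _ => hterm u)]
      rw [Finset.sum_ite_mem, Finset.univ_inter, dtU, Finset.mul_sum]
    rw [hsum]
    by_cases heU : e ∈ EUb ends U
    · by_cases heF : e ∈ F
      · -- failed boundary edge
        have hel : e ≠ l := fun h => hlF (h ▸ heF)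
        have hne : (EUb ends U ∩ F).Nonempty := ⟨e, Finset.mem_inter.mpr ⟨heU, heF⟩⟩
        have h2 := hcond2 hne l hlU hlF e (Finset.mem_inter.mpr ⟨heU, heF⟩)
        have hle : dtU Dt U e * d ≤ 0 := not_lt.mp h2
        have hkey : sgn * dtU Dt U e = -|dtU Dt U e| := by
          by_cases hp : 0 < d
          · have : dtU Dt U e ≤ 0 := by nlinarith
            simp [hsgn_def, hp, abs_of_nonpos this]
          · have hneg : d < 0 := lt_of_le_of_ne (not_lt.mp hp) hdne
            have : 0 ≤ dtU Dt U e := by nlinarith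
            simp [hsgn_def, hp, abs_of_nonneg this]
        simp [heU, heF, hel, hkey]
      · by_cases hel : e = l
        · subst hel
          simp only [heU, heF, if_pos rfl]
          simp only [and_false, false_and, if_false, not_false_iff, and_true]
          rw [← hd_def, hsgnd]; ring_nf
          simp
        · -- operational boundary edge other than l
          have h1 := hcond1 e heU heF l hlU hlF
          have hkey : sgn * dtU Dt U e = |dtU Dt U e| := by
            by_cases hp : 0 < d
            · have : 0 < dtU Dt U e := by nlinarith
              simp [hsgn_def, hp, abs_of_pos this]
            · have hneg : d < 0 := lt_of_le_of_ne (not_lt.mp hp) hdne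
              have : dtU Dt U e < 0 := by nlinarith
              simp [hsgn_def, hp, abs_of_neg this]
          simp [heU, heF, hel, hkey]
    · have hel : e ≠ l := fun h => heU (h ▸ hlU)
      simp [heU, hel, hoff e heU]
  · -- the strict inequality
    have hx : (∑ e, ((if e ∈ EUb ends U ∧ e ∈ F then |dtU Dt U e| else 0)
          * (1 - (if e ∈ F then (1:ℝ) else 0))
        + (if e ∈ EUb ends U ∧ e ∉ F ∧ e ≠ l then |dtU Dt U e| else 0)
          * (if e ∈ F then (1:ℝ) else 0))) = 0 := by
      refine Finset.sum_eq_zero fun e _ => ?_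
      by_cases heF : e ∈ F <;> simp [heF]
    rw [hx, add_zero]
    have hg : (∑ u, (gD u * (if u ∈ U ∧ 0 < d then (1:ℝ) else 0)
        + gDm u * (if u ∈ U ∧ ¬ 0 < d then 1 else 0)))
        = (if 0 < d then ∑ u ∈ U, gD u else ∑ u ∈ U, gDm u) := by
      by_cases hp : 0 < d
      · simp only [hp, and_true, not_true, and_false, if_false, mul_zero, add_zero,
          if_true, mul_ite, mul_one]
        rw [Finset.sum_ite_mem, Finset.univ_inter]
      · simp only [hp, and_false, if_false, mul_zero, zero_add, not_false_iff, and_true,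
          if_false, mul_ite, mul_one]
        rw [Finset.sum_ite_mem, Finset.univ_inter]
    rw [hg]
    simpa [gt_iff_lt] using hcond3
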